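/- For the SCGD iterates, for every integer t ≥ 1 and every real c > 0, E_A‖y_{t+1} − g_S(x_t)‖² ≤ (c/e)^c · (tβ)^{−c} · E_A‖y_1 − g_S(x_0)‖² + L_f²·L_g⁴·η²·β^{−2} + 2·V_g·β. -/

import Mathlib

open MeasureTheory
open scoped ENNReal

open ProbabilityTheory RealInnerProductSpace

lemma aux_proj_le {E : Type*} [NormedAddCommGroup E] [InnerProductSpace ℝ E] {X : Set E}
    (hXconv : Convex ℝ X) {pz w z : E} (hpz : pz ∈ X) (hw : w ∈ X)
    (hmin : ∀ u ∈ X, dist pz z ≤ dist u z) : ‖pz - w‖ ≤ ‖z - w‖ := by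
  have hne : Nonempty X := ⟨⟨pz, hpz⟩⟩
  have hbdd : BddBelow (Set.range fun u : X => ‖z - (u : E)‖) :=
    ⟨0, fun _ ⟨_, h⟩ => h ▸ norm_nonneg _⟩
  have hmin' : ∀ u : X, ‖z - pz‖ ≤ ‖z - (u : E)‖ := by
    intro u
    have := hmin u u.2
    simpa [dist_eq_norm, norm_sub_rev] using this
  have heq : ‖z - pz‖ = ⨅ u : X, ‖z - (u : E)‖ :=
    le_antisymm (le_ciInf hmin') (ciInf_le hbdd ⟨pz, hpz⟩)
  have hinner : ⟪z - pz, w - pz⟫ ≤ 0 :=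
    (norm_eq_iInf_iff_real_inner_le_zero hXconv hpz).1 heq w hw
  have hsq : ‖pz - w‖ ^ 2 ≤ ‖z - w‖ ^ 2 := by
    have expand : ‖z - w‖ ^ 2 = ‖z - pz‖ ^ 2 - 2 * ⟪z - pz, w - pz⟫ + ‖w - pz‖ ^ 2 := by
      have h9 : z - w = (z - pz) - (w - pz) := by abel
      rw [h9, norm_sub_sq_real]
    have h8 : ‖pz - w‖ ^ 2 = ‖w - pz‖ ^ 2 := by rw [norm_sub_rev]
    nlinarith [sq_nonneg ‖z - pz‖]
  exact (pow_le_pow_iff_left₀ (norm_nonneg _) (norm_nonneg _) two_ne_zero).1 hsq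

lemma aux_exp_bound {c s : ℝ} (hc : 0 < c) (hs : 0 < s) :
    Real.exp (-s) ≤ (c / Real.exp 1) ^ c * s ^ (-c) := by
  have h1 : Real.log (s / c) ≤ s / c - 1 := Real.log_le_sub_one_of_pos (by positivity)
  have h2 : c * Real.log (s / c) ≤ s - c := by
    have := mul_le_mul_of_nonneg_left h1 hc.le
    calc c * Real.log (s/c) ≤ c * (s/c - 1) := this
      _ = s - c := by field_simp
  have hce : (0:ℝ) < c / Real.exp 1 := by positivity
  rw [Real.rpow_def_of_pos hce, Real.rpow_def_of_pos hs, ← Real.exp_add]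
  apply Real.exp_le_exp.2
  rw [Real.log_div hc.ne' (Real.exp_pos 1).ne', Real.log_exp]
  have hls : Real.log (s / c) = Real.log s - Real.log c := Real.log_div hs.ne' hc.ne'
  nlinarith [h2, hls]

lemma aux_young {a b u β : ℝ} (ha : 0 ≤ a) (hb : 0 ≤ b) (hβ0 : 0 < β) (hβ1 : β < 1)
    (hu : 0 ≤ u) (h : u ≤ a + b) : (1-β)^2 * u^2 ≤ (1-β)*a^2 + b^2/β := by
  have hγ : (0:ℝ) ≤ 1 - β := by linarith
  have h0 : u * u ≤ (a+b) * (a+b) := mul_le_mul h h hu (by linarith)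
  have h1 : (1-β)^2 * u^2 ≤ (1-β)^2 * (a+b)^2 := by nlinarith [sq_nonneg (1-β)]
  have hc2 : (0:ℝ) ≤ β + β^2 - β^3 := by nlinarith
  have key2 : β*((1-β)^2*(a+b)^2) ≤ β*((1-β)*a^2) + b^2 := by
    nlinarith [sq_nonneg (β*(1-β)*a - (1-β)*b),
      mul_nonneg (mul_nonneg (mul_nonneg hβ0.le hβ0.le) (mul_nonneg hβ0.le hγ)) (sq_nonneg a),
      mul_nonneg hc2 (sq_nonneg b)]
  have h3 : (1-β)^2*(a+b)^2 = (β*((1-β)^2*(a+b)^2))/β := by field_simp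
  have h4 : (β*((1-β)^2*(a+b)^2))/β ≤ (β*((1-β)*a^2) + b^2)/β := by gcongr
  have h5 : (β*((1-β)*a^2) + b^2)/β = (1-β)*a^2 + b^2/β := by field_simp
  linarith

set_option maxHeartbeats 1600000 in
/-- Tracking error of the moving-average sequence for SCGD:
for every `t ≥ 1` and every `c > 0`,
`E_A‖y_{t+1} − g_S(x_t)‖² ≤ (c/e)^c (tβ)^{−c} E_A‖y_1 − g_S(x_0)‖²
  + L_f² L_g⁴ η² β^{−2} + 2 V_g β`. -/
theorem stmt_13
    (p d n m : ℕ) (hp : 1 ≤ p) (hd : 1 ≤ d) (hn : 1 ≤ n) (hm : 1 ≤ m)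
    (X : Set (EuclideanSpace ℝ (Fin p)))
    (hXne : X.Nonempty) (hXcl : IsClosed X) (hXconv : Convex ℝ X)
    (proj : EuclideanSpace ℝ (Fin p) → EuclideanSpace ℝ (Fin p))
    (hproj : ∀ z, proj z ∈ X ∧ ∀ w ∈ X, dist (proj z) z ≤ dist w z)
    (f : Fin n → EuclideanSpace ℝ (Fin d) → ℝ)
    (g : Fin m → EuclideanSpace ℝ (Fin p) → EuclideanSpace ℝ (Fin d))
    (Lf Lg Vg η β : ℝ)
    (hLf : 0 < Lf) (hLg : 0 < Lg) (hη : 0 < η) (hβ0 : 0 < β) (hβ1 : β < 1)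
    (hfdiff : ∀ i, Differentiable ℝ (f i))
    (hgdiff : ∀ j, Differentiable ℝ (g j))
    (hflip : ∀ i y₁ y₂, |f i y₁ - f i y₂| ≤ Lf * ‖y₁ - y₂‖)
    (hglip : ∀ j x₁ x₂, ‖g j x₁ - g j x₂‖ ≤ Lg * ‖x₁ - x₂‖)
    (gS : EuclideanSpace ℝ (Fin p) → EuclideanSpace ℝ (Fin d))
    (hgS : ∀ z, gS z = (m : ℝ)⁻¹ • ∑ j, g j z)
    (hVg : ∀ z ∈ X, (m : ℝ)⁻¹ * ∑ j, ‖g j z - gS z‖ ^ 2 ≤ Vg)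
    -- random indices
    (Ω : Type) [MeasurableSpace Ω] (μ : Measure Ω) [IsProbabilityMeasure μ]
    (I : ℕ → Ω → Fin n) (J : ℕ → Ω → Fin m)
    (hImeas : ∀ t, Measurable (I t)) (hJmeas : ∀ t, Measurable (J t))
    (hIunif : ∀ t a, μ {ω | I t ω = a} = (n : ℝ≥0∞)⁻¹)
    (hJunif : ∀ t b, μ {ω | J t ω = b} = (m : ℝ≥0∞)⁻¹)
    (hiid : ProbabilityTheory.iIndepFun
      (fun t ω => (I t ω, J t ω)) μ)
    (hIJindep : ∀ t, ProbabilityTheory.IndepFun (I t) (J t) μ)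
    -- SCGD iterates
    (x0 : EuclideanSpace ℝ (Fin p)) (y0 : EuclideanSpace ℝ (Fin d)) (hx0 : x0 ∈ X)
    (x : ℕ → Ω → EuclideanSpace ℝ (Fin p)) (y : ℕ → Ω → EuclideanSpace ℝ (Fin d))
    (hxmeas : ∀ t, Measurable (x t)) (hymeas : ∀ t, Measurable (y t))
    (hxinit : ∀ ω, x 0 ω = x0) (hyinit : ∀ ω, y 0 ω = y0)
    (hyrec : ∀ t ω, y (t + 1) ω = (1 - β) • y t ω + β • g (J t ω) (x t ω))
    (hxrec : ∀ t ω, x (t + 1) ω = proj (x t ω - η •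
      (ContinuousLinearMap.adjoint (fderiv ℝ (g (J t ω)) (x t ω))
        (gradient (f (I t ω)) (y (t + 1) ω))))) :
    ∀ t : ℕ, 1 ≤ t → ∀ c : ℝ, 0 < c →
      ∫⁻ ω, (‖y (t + 1) ω - gS (x t ω)‖₊ : ℝ≥0∞) ^ 2 ∂μ ≤
        ENNReal.ofReal ((c / Real.exp 1) ^ c * ((t : ℝ) * β) ^ (-c)) *
            ∫⁻ ω, (‖y 1 ω - gS (x 0 ω)‖₊ : ℝ≥0∞) ^ 2 ∂μ +
          ENNReal.ofReal (Lf ^ 2 * Lg ^ 4 * η ^ 2 / β ^ 2 + 2 * Vg * β) := by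
  -- basic facts
  have hmR : (0:ℝ) < m := by exact_mod_cast hm
  have hγ0 : (0:ℝ) < 1 - β := by linarith
  -- membership of iterates in X
  have hXmem : ∀ t ω, x t ω ∈ X := by
    intro t
    induction t with
    | zero => intro ω; rw [hxinit]; exact hx0
    | succ t ih => intro ω; rw [hxrec]; exact (hproj _).1
  -- continuity / Lipschitz facts about gS
  have hgScont : Continuous gS := by
    have : gS = fun z => (m : ℝ)⁻¹ • ∑ j, g j z := funext hgS
    rw [this]
    exact (continuous_const : Continuous fun _ : EuclideanSpace ℝ (Fin p) => (m:ℝ)⁻¹).smul (continuous_finset_sum _ fun j _ => (hgdiff j).continuous)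
  have hgSlip : ∀ z₁ z₂, ‖gS z₁ - gS z₂‖ ≤ Lg * ‖z₁ - z₂‖ := by
    intro z₁ z₂
    rw [hgS z₁, hgS z₂, ← smul_sub, ← Finset.sum_sub_distrib]
    rw [norm_smul]
    calc ‖(m:ℝ)⁻¹‖ * ‖∑ j, (g j z₁ - g j z₂)‖ ≤ (m:ℝ)⁻¹ * ∑ j, ‖g j z₁ - g j z₂‖ := by
          rw [Real.norm_eq_abs, abs_of_pos (by positivity)]
          exact mul_le_mul_of_nonneg_left (norm_sum_le _ _) (by positivity)
      _ ≤ (m:ℝ)⁻¹ * ∑ _j : Fin m, (Lg * ‖z₁ - z₂‖) := by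
          apply mul_le_mul_of_nonneg_left _ (by positivity)
          exact Finset.sum_le_sum fun j _ => hglip j z₁ z₂
      _ = Lg * ‖z₁ - z₂‖ := by
          rw [Finset.sum_const, Finset.card_univ, Fintype.card_fin, nsmul_eq_mul]
          field_simp
  -- step bound on x
  have hstepx : ∀ t ω, ‖x (t+1) ω - x t ω‖ ≤ η * (Lg * Lf) := by
    intro t ω
    set v := ContinuousLinearMap.adjoint (fderiv ℝ (g (J t ω)) (x t ω))
      (gradient (f (I t ω)) (y (t + 1) ω)) with hv
    have hvnorm : ‖v‖ ≤ Lg * Lf := by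
      have hg : LipschitzWith Lg.toNNReal (g (J t ω)) := by
        apply LipschitzWith.of_dist_le_mul
        intro x₁ x₂
        simpa [dist_eq_norm, Real.coe_toNNReal _ hLg.le] using hglip (J t ω) x₁ x₂
      have hf : LipschitzWith Lf.toNNReal (f (I t ω)) := by
        apply LipschitzWith.of_dist_le_mul
        intro y₁ y₂
        simpa [dist_eq_norm, Real.coe_toNNReal _ hLf.le, Real.dist_eq] using hflip (I t ω) y₁ y₂
      have h1 : ‖fderiv ℝ (g (J t ω)) (x t ω)‖ ≤ Lg := by
        simpa [Real.coe_toNNReal _ hLg.le] using norm_fderiv_le_of_lipschitz ℝ hg (x₀ := x t ω)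
      have h2 : ‖gradient (f (I t ω)) (y (t+1) ω)‖ ≤ Lf := by
        rw [gradient, LinearIsometryEquiv.norm_map]
        simpa [Real.coe_toNNReal _ hLf.le] using
          norm_fderiv_le_of_lipschitz ℝ hf (x₀ := y (t+1) ω)
      calc ‖v‖ ≤ ‖ContinuousLinearMap.adjoint (fderiv ℝ (g (J t ω)) (x t ω))‖ *
            ‖gradient (f (I t ω)) (y (t+1) ω)‖ := ContinuousLinearMap.le_opNorm _ _
        _ ≤ Lg * Lf := by
            rw [LinearIsometryEquiv.norm_map]
            exact mul_le_mul h1 h2 (norm_nonneg _) hLg.le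
    have hproj_le : ‖x (t+1) ω - x t ω‖ ≤ ‖(x t ω - η • v) - x t ω‖ := by
      rw [hxrec t ω, ← hv]
      exact aux_proj_le hXconv (hproj _).1 (hXmem t ω) (hproj _).2
    calc ‖x (t+1) ω - x t ω‖ ≤ ‖(x t ω - η • v) - x t ω‖ := hproj_le
      _ = η * ‖v‖ := by
          rw [sub_sub_cancel_left, norm_neg, norm_smul, Real.norm_eq_abs, abs_of_pos hη]
      _ ≤ η * (Lg * Lf) := by exact mul_le_mul_of_nonneg_left hvnorm hη.le
  -- the one-step transition map
  set step : (EuclideanSpace ℝ (Fin p) × EuclideanSpace ℝ (Fin d)) → (Fin n × Fin m) →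
      (EuclideanSpace ℝ (Fin p) × EuclideanSpace ℝ (Fin d)) := fun q ij =>
    (proj (q.1 - η • (ContinuousLinearMap.adjoint (fderiv ℝ (g ij.2) q.1)
        (gradient (f ij.1) ((1 - β) • q.2 + β • g ij.2 q.1)))),
      (1 - β) • q.2 + β • g ij.2 q.1) with hstep_def
  have hstep_eq : ∀ t ω, (x (t+1) ω, y (t+1) ω) = step (x t ω, y t ω) (I t ω, J t ω) := by
    intro t ω
    have hy := hyrec t ω
    refine Prod.ext ?_ ?_
    · show x (t+1) ω = proj (x t ω - η • (ContinuousLinearMap.adjoint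
        (fderiv ℝ (g (J t ω)) (x t ω))
        (gradient (f (I t ω)) ((1 - β) • y t ω + β • g (J t ω) (x t ω)))))
      rw [hxrec t ω, ← hy]
    · exact hy
  -- finite range of the pair process
  have hfin : ∀ t, (Set.range fun ω => (x t ω, y t ω)).Finite := by
    intro t
    induction t with
    | zero =>
      apply (Set.finite_singleton (x0, y0)).subset
      rintro _ ⟨ω, rfl⟩
      simp [hxinit, hyinit]
    | succ t ih =>
      apply Set.Finite.subset ((ih.prod (Set.finite_univ (α := Fin n × Fin m))).image
        (fun qb => step qb.1 qb.2))
      rintro _ ⟨ω, rfl⟩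
      exact ⟨((x t ω, y t ω), (I t ω, J t ω)), ⟨⟨ω, rfl⟩, Set.mem_univ _⟩, (hstep_eq t ω).symm⟩
  -- representation of the pair process as a function of past indices
  have hrep : ∀ t, ∃ Φ : ((i : (Finset.range t : Finset ℕ)) → Fin n × Fin m) →
      (EuclideanSpace ℝ (Fin p) × EuclideanSpace ℝ (Fin d)),
      ∀ ω, (x t ω, y t ω) = Φ (fun i => (I i ω, J i ω)) := by
    intro t
    induction t with
    | zero =>
      refine ⟨fun _ => (x0, y0), fun ω => ?_⟩
      simp [hxinit, hyinit]
    | succ t ih =>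
      obtain ⟨Φ, hΦ⟩ := ih
      refine ⟨fun v => step (Φ (fun i => v ⟨i.1, Finset.mem_range.2
        (Nat.lt_succ_of_lt (Finset.mem_range.1 i.2))⟩)) (v ⟨t, Finset.self_mem_range_succ t⟩),
        fun ω => ?_⟩
      rw [hstep_eq t ω, hΦ ω]
  have hPmeas : ∀ s : ℕ, Measurable (fun ω => (I s ω, J s ω)) :=
    fun s => (hImeas s).prodMk (hJmeas s)
  -- independence of the pair (x t, y t) from J t
  have hindep : ∀ t, IndepFun (fun ω => (x t ω, y t ω)) (J t) μ := by
    intro t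
    obtain ⟨Φ, hΦ⟩ := hrep t
    have h := (hiid.indepFun_finset (Finset.range t) {t} (by simp) hPmeas).comp
      (φ := Φ) (ψ := fun v : ((i : ({t} : Finset ℕ)) → Fin n × Fin m) =>
        (v ⟨t, Finset.mem_singleton_self t⟩).2)
      (measurable_of_countable _) (measurable_of_countable _)
    have e1 : (fun ω => (x t ω, y t ω)) =
        (Φ ∘ fun ω (i : (Finset.range t : Finset ℕ)) => (I i ω, J i ω)) := funext fun ω => hΦ ω
    rw [e1]
    exact h
  -- integrability of observables
  have hInt : ∀ (s : ℕ) (ψ : (EuclideanSpace ℝ (Fin p) × EuclideanSpace ℝ (Fin d)) → Fin m → ℝ),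
      (∀ b, Continuous fun q => ψ q b) →
      Integrable (fun ω => ψ (x s ω, y s ω) (J s ω)) μ := by
    intro s ψ hψ
    have hmeaspair : Measurable (fun ω => (x s ω, y s ω)) := (hxmeas s).prodMk (hymeas s)
    have hFmeas : Measurable (fun ω => ψ (x s ω, y s ω) (J s ω)) := by
      have huncurry : Measurable (fun qb : (EuclideanSpace ℝ (Fin p) ×
          EuclideanSpace ℝ (Fin d)) × Fin m => ψ qb.1 qb.2) :=
        measurable_from_prod_countable_left (fun b => (hψ b).measurable)
      exact huncurry.comp (hmeaspair.prodMk (hJmeas s))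
    have hr : (Set.range fun ω => ψ (x s ω, y s ω) (J s ω)).Finite := by
      apply Set.Finite.subset (((hfin s).prod (Set.finite_univ (α := Fin m))).image
        (fun qb => ψ qb.1 qb.2))
      rintro _ ⟨ω, rfl⟩
      exact ⟨((x s ω, y s ω), J s ω), ⟨⟨ω, rfl⟩, Set.mem_univ _⟩, rfl⟩
    obtain ⟨C, hC⟩ := (hr.image abs).bddAbove
    apply Integrable.mono' (integrable_const C) hFmeas.aestronglyMeasurable
    refine ae_of_all _ fun ω => ?_
    rw [Real.norm_eq_abs]
    exact hC ⟨_, ⟨ω, rfl⟩, rfl⟩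
  -- key lemma : integrating out the independent index J s
  have hkey : ∀ (s : ℕ) (ψ : (EuclideanSpace ℝ (Fin p) × EuclideanSpace ℝ (Fin d)) → Fin m → ℝ),
      (∀ b, Continuous fun q => ψ q b) →
      ∫ ω, ψ (x s ω, y s ω) (J s ω) ∂μ = (m:ℝ)⁻¹ * ∑ b, ∫ ω, ψ (x s ω, y s ω) b ∂μ := by
    intro s ψ hψ
    have hmeaspair : Measurable (fun ω => (x s ω, y s ω)) := (hxmeas s).prodMk (hymeas s)
    have hre : ∀ ω, ψ (x s ω, y s ω) (J s ω) =
        ∑ b, (if J s ω = b then (1:ℝ) else 0) * ψ (x s ω, y s ω) b := by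
      intro ω
      rw [Finset.sum_eq_single (J s ω)]
      · simp
      · intro b _ hb
        rw [if_neg (Ne.symm hb), zero_mul]
      · intro h; exact absurd (Finset.mem_univ _) h
    rw [integral_congr_ae (ae_of_all _ hre)]
    rw [integral_finset_sum _ (fun b _ => hInt s
      (fun q j => (if j = b then (1:ℝ) else 0) * ψ q b)
      (fun j => continuous_const.mul (hψ b)))]
    have heach : ∀ b : Fin m, ∫ ω, (if J s ω = b then (1:ℝ) else 0) * ψ (x s ω, y s ω) b ∂μ =
        (m:ℝ)⁻¹ * ∫ ω, ψ (x s ω, y s ω) b ∂μ := by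
      intro b
      have hsmeas : MeasurableSet {ω | J s ω = b} := (hJmeas s) (measurableSet_singleton b)
      have hind : IndepFun (fun ω => if J s ω = b then (1:ℝ) else 0)
          (fun ω => ψ (x s ω, y s ω) b) μ := by
        exact ((hindep s).symm).comp (φ := fun j : Fin m => if j = b then (1:ℝ) else 0)
          (ψ := fun q => ψ q b) (measurable_of_countable _) (hψ b).measurable
      have hXm : AEStronglyMeasurable (fun ω => if J s ω = b then (1:ℝ) else 0) μ :=
        (((measurable_of_countable (fun j : Fin m => if j = b then (1:ℝ) else 0))).comp
          (hJmeas s)).aestronglyMeasurable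
      have hYm : AEStronglyMeasurable (fun ω => ψ (x s ω, y s ω) b) μ :=
        ((hψ b).measurable.comp hmeaspair).aestronglyMeasurable
      have hmul := hind.integral_mul_eq_mul_integral hXm hYm
      have hindval : ∫ ω, (if J s ω = b then (1:ℝ) else 0) ∂μ = (m:ℝ)⁻¹ := by
        have hie : (fun ω => if J s ω = b then (1:ℝ) else 0) =
            Set.indicator {ω | J s ω = b} (fun _ => (1:ℝ)) := by
          funext ω
          by_cases h : J s ω = b <;> simp [Set.indicator, h]
        rw [hie, integral_indicator_const _ hsmeas, measureReal_def, hJunif s b]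
        simp
      calc ∫ ω, (if J s ω = b then (1:ℝ) else 0) * ψ (x s ω, y s ω) b ∂μ
          = ∫ ω, ((fun ω => if J s ω = b then (1:ℝ) else 0) *
            (fun ω => ψ (x s ω, y s ω) b)) ω ∂μ := by rfl
        _ = (∫ ω, (if J s ω = b then (1:ℝ) else 0) ∂μ) * ∫ ω, ψ (x s ω, y s ω) b ∂μ := hmul
        _ = (m:ℝ)⁻¹ * ∫ ω, ψ (x s ω, y s ω) b ∂μ := by rw [hindval]
    rw [Finset.sum_congr rfl (fun b _ => heach b), ← Finset.mul_sum]
  -- continuity of the observables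
  have contψ2 : ∀ b : Fin m, Continuous fun q : (EuclideanSpace ℝ (Fin p) ×
      EuclideanSpace ℝ (Fin d)) => ‖(1-β) • q.2 + β • g b q.1 - gS q.1‖^2 :=
    fun b => by have := (hgdiff b).continuous; fun_prop
  have contψ3 : ∀ b : Fin m, Continuous fun q : (EuclideanSpace ℝ (Fin p) ×
      EuclideanSpace ℝ (Fin d)) => ‖g b q.1 - gS q.1‖^2 :=
    fun b => ((((hgdiff b).continuous.comp continuous_fst).sub
      (hgScont.comp continuous_fst)).norm).pow 2
  have contψ4 : ∀ b : Fin m, Continuous fun q : (EuclideanSpace ℝ (Fin p) ×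
      EuclideanSpace ℝ (Fin d)) => ⟪q.2 - gS q.1, g b q.1 - gS q.1⟫ :=
    fun b => Continuous.inner (continuous_snd.sub (hgScont.comp continuous_fst))
      (((hgdiff b).continuous.comp continuous_fst).sub (hgScont.comp continuous_fst))
  have hDint : ∀ s, Integrable (fun ω => ‖y (s+1) ω - gS (x s ω)‖^2) μ := by
    intro s
    have h := hInt s (fun q b => ‖(1-β) • q.2 + β • g b q.1 - gS q.1‖^2) contψ2
    exact h.congr (ae_of_all _ fun ω => by simp only []; rw [← hyrec s ω])
  -- sum of deviations vanishes
  have hsum0 : ∀ z, ∑ b : Fin m, (g b z - gS z) = 0 := by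
    intro z
    rw [Finset.sum_sub_distrib, Finset.sum_const, Finset.card_univ, Fintype.card_fin, hgS z,
      ← Nat.cast_smul_eq_nsmul ℝ m, smul_smul, mul_inv_cancel₀ hmR.ne', one_smul, sub_self]
  -- variance bound
  have hVg0 : 0 ≤ Vg := by
    obtain ⟨z, hz⟩ := hXne
    refine le_trans ?_ (hVg z hz)
    positivity
  -- the one-step recursion for the tracking error
  have hDrec : ∀ t : ℕ, ∫ ω, ‖y (t+1+1) ω - gS (x (t+1) ω)‖^2 ∂μ ≤
      (1-β) * ∫ ω, ‖y (t+1) ω - gS (x t ω)‖^2 ∂μ + ((η*Lf*Lg^2)^2/β + β^2*Vg) := by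
    intro t
    -- variance term
    have hG3 : ∫ ω, ‖g (J (t+1) ω) (x (t+1) ω) - gS (x (t+1) ω)‖^2 ∂μ ≤ Vg := by
      have hk' : ∫ ω, ‖g (J (t+1) ω) (x (t+1) ω) - gS (x (t+1) ω)‖^2 ∂μ =
          (m:ℝ)⁻¹ * ∑ b, ∫ ω, ‖g b (x (t+1) ω) - gS (x (t+1) ω)‖^2 ∂μ :=
        hkey (t+1) (fun q b => ‖g b q.1 - gS q.1‖^2) contψ3
      rw [hk']
      have hswap : ∑ b : Fin m, ∫ ω, ‖g b (x (t+1) ω) - gS (x (t+1) ω)‖^2 ∂μ =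
          ∫ ω, ∑ b : Fin m, ‖g b (x (t+1) ω) - gS (x (t+1) ω)‖^2 ∂μ :=
        (integral_finset_sum _ fun b _ =>
          hInt (t+1) (fun q _ => ‖g b q.1 - gS q.1‖^2) (fun _ => contψ3 b)).symm
      rw [hswap, ← integral_const_mul]
      calc ∫ ω, (m:ℝ)⁻¹ * ∑ b : Fin m, ‖g b (x (t+1) ω) - gS (x (t+1) ω)‖^2 ∂μ
          ≤ ∫ _ω, Vg ∂μ := by
            apply integral_mono (hInt (t+1)
              (fun q _ => (m:ℝ)⁻¹ * ∑ b : Fin m, ‖g b q.1 - gS q.1‖^2)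
              (fun _ => continuous_const.mul (continuous_finset_sum _ fun b _ => contψ3 b)))
              (integrable_const Vg)
            intro ω
            exact hVg _ (hXmem (t+1) ω)
        _ = Vg := by simp
    -- martingale term
    have hG4 : ∫ ω, ⟪y (t+1) ω - gS (x (t+1) ω),
        g (J (t+1) ω) (x (t+1) ω) - gS (x (t+1) ω)⟫ ∂μ = 0 := by
      have hk' : ∫ ω, ⟪y (t+1) ω - gS (x (t+1) ω),
          g (J (t+1) ω) (x (t+1) ω) - gS (x (t+1) ω)⟫ ∂μ =
          (m:ℝ)⁻¹ * ∑ b, ∫ ω, ⟪y (t+1) ω - gS (x (t+1) ω),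
            g b (x (t+1) ω) - gS (x (t+1) ω)⟫ ∂μ :=
        hkey (t+1) (fun q b => ⟪q.2 - gS q.1, g b q.1 - gS q.1⟫) contψ4
      rw [hk']
      have hswap : ∑ b : Fin m, ∫ ω, ⟪y (t+1) ω - gS (x (t+1) ω),
          g b (x (t+1) ω) - gS (x (t+1) ω)⟫ ∂μ =
          ∫ ω, ∑ b : Fin m, ⟪y (t+1) ω - gS (x (t+1) ω),
            g b (x (t+1) ω) - gS (x (t+1) ω)⟫ ∂μ :=
        (integral_finset_sum _ fun b _ =>
          hInt (t+1) (fun q _ => ⟪q.2 - gS q.1, g b q.1 - gS q.1⟫) (fun _ => contψ4 b)).symm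
      rw [hswap]
      have hzero : ∀ ω, ∑ b : Fin m, ⟪y (t+1) ω - gS (x (t+1) ω),
          g b (x (t+1) ω) - gS (x (t+1) ω)⟫ = (0:ℝ) := by
        intro ω
        rw [← inner_sum, hsum0 (x (t+1) ω), inner_zero_right]
      rw [integral_congr_ae (ae_of_all _ hzero)]
      simp
    -- pointwise expansion
    have hnb : ‖(β:ℝ)‖ = β := by rw [Real.norm_eq_abs, abs_of_pos hβ0]
    have hn1b : ‖(1-β:ℝ)‖ = 1-β := by rw [Real.norm_eq_abs, abs_of_pos hγ0]
    have hexp : ∀ ω, ‖y (t+1+1) ω - gS (x (t+1) ω)‖^2 =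
        (1-β)^2 * ‖y (t+1) ω - gS (x (t+1) ω)‖^2 +
        2*((1-β)*β*⟪y (t+1) ω - gS (x (t+1) ω),
          g (J (t+1) ω) (x (t+1) ω) - gS (x (t+1) ω)⟫) +
        β^2 * ‖g (J (t+1) ω) (x (t+1) ω) - gS (x (t+1) ω)‖^2 := by
      intro ω
      have hid : y (t+1+1) ω - gS (x (t+1) ω) =
          (1-β) • (y (t+1) ω - gS (x (t+1) ω)) +
          β • (g (J (t+1) ω) (x (t+1) ω) - gS (x (t+1) ω)) := by
        rw [hyrec (t+1) ω]
        module
      rw [hid, norm_add_sq_real, norm_smul, norm_smul, real_inner_smul_left,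
        real_inner_smul_right, hnb, hn1b]
      ring
    -- pointwise bound
    have hpt : ∀ ω, ‖y (t+1+1) ω - gS (x (t+1) ω)‖^2 ≤
        ((1-β) * ‖y (t+1) ω - gS (x t ω)‖^2 + (η*Lf*Lg^2)^2/β) +
        (β^2 * ‖g (J (t+1) ω) (x (t+1) ω) - gS (x (t+1) ω)‖^2 +
          (2*((1-β)*β)) * ⟪y (t+1) ω - gS (x (t+1) ω),
            g (J (t+1) ω) (x (t+1) ω) - gS (x (t+1) ω)⟫) := by
      intro ω
      have hd : ‖gS (x t ω) - gS (x (t+1) ω)‖ ≤ η*Lf*Lg^2 := by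
        calc ‖gS (x t ω) - gS (x (t+1) ω)‖ ≤ Lg * ‖x t ω - x (t+1) ω‖ := hgSlip _ _
          _ ≤ Lg * (η * (Lg * Lf)) := by
              rw [norm_sub_rev]
              exact mul_le_mul_of_nonneg_left (hstepx t ω) hLg.le
          _ = η*Lf*Lg^2 := by ring
      have htri : ‖y (t+1) ω - gS (x (t+1) ω)‖ ≤ ‖y (t+1) ω - gS (x t ω)‖ + η*Lf*Lg^2 := by
        have hsplit : y (t+1) ω - gS (x (t+1) ω) =
            (y (t+1) ω - gS (x t ω)) + (gS (x t ω) - gS (x (t+1) ω)) := by abel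
        rw [hsplit]
        exact le_trans (norm_add_le _ _) (by linarith)
      have hy2 := aux_young (norm_nonneg _) (by positivity) hβ0 hβ1 (norm_nonneg _) htri
      have he := hexp ω
      nlinarith [he, hy2]
    -- integrate the pointwise bound
    have hIntζ : Integrable
        (fun ω => ‖g (J (t+1) ω) (x (t+1) ω) - gS (x (t+1) ω)‖^2) μ :=
      hInt (t+1) (fun q b => ‖g b q.1 - gS q.1‖^2) contψ3
    have hIntc : Integrable (fun ω => ⟪y (t+1) ω - gS (x (t+1) ω),
        g (J (t+1) ω) (x (t+1) ω) - gS (x (t+1) ω)⟫) μ :=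
      hInt (t+1) (fun q b => ⟪q.2 - gS q.1, g b q.1 - gS q.1⟫) contψ4
    have hI1 : Integrable (fun ω => (1-β) * ‖y (t+1) ω - gS (x t ω)‖^2 +
        (η*Lf*Lg^2)^2/β) μ := ((hDint t).const_mul _).add (integrable_const _)
    have hI2 : Integrable (fun ω =>
        β^2 * ‖g (J (t+1) ω) (x (t+1) ω) - gS (x (t+1) ω)‖^2 +
        (2*((1-β)*β)) * ⟪y (t+1) ω - gS (x (t+1) ω),
          g (J (t+1) ω) (x (t+1) ω) - gS (x (t+1) ω)⟫) μ :=
      (hIntζ.const_mul _).add (hIntc.const_mul _)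
    calc ∫ ω, ‖y (t+1+1) ω - gS (x (t+1) ω)‖^2 ∂μ
        ≤ ∫ ω, (((1-β) * ‖y (t+1) ω - gS (x t ω)‖^2 + (η*Lf*Lg^2)^2/β) +
          (β^2 * ‖g (J (t+1) ω) (x (t+1) ω) - gS (x (t+1) ω)‖^2 +
          (2*((1-β)*β)) * ⟪y (t+1) ω - gS (x (t+1) ω),
            g (J (t+1) ω) (x (t+1) ω) - gS (x (t+1) ω)⟫)) ∂μ :=
          integral_mono (hDint (t+1)) (hI1.add hI2) hpt
      _ = ((1-β) * ∫ ω, ‖y (t+1) ω - gS (x t ω)‖^2 ∂μ + (η*Lf*Lg^2)^2/β) +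
          (β^2 * ∫ ω, ‖g (J (t+1) ω) (x (t+1) ω) - gS (x (t+1) ω)‖^2 ∂μ +
          (2*((1-β)*β)) * ∫ ω, ⟪y (t+1) ω - gS (x (t+1) ω),
            g (J (t+1) ω) (x (t+1) ω) - gS (x (t+1) ω)⟫ ∂μ) := by
          rw [integral_add hI1 hI2,
            integral_add ((hDint t).const_mul _) (integrable_const _),
            integral_add (hIntζ.const_mul _) (hIntc.const_mul _),
            integral_const_mul, integral_const_mul, integral_const_mul, integral_const]
          simp
      _ ≤ (1-β) * ∫ ω, ‖y (t+1) ω - gS (x t ω)‖^2 ∂μ + ((η*Lf*Lg^2)^2/β + β^2*Vg) := by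
          rw [hG4]
          have : β^2 * ∫ ω, ‖g (J (t+1) ω) (x (t+1) ω) - gS (x (t+1) ω)‖^2 ∂μ ≤ β^2 * Vg :=
            mul_le_mul_of_nonneg_left hG3 (by positivity)
          linarith
  have hC0 : 0 ≤ (η*Lf*Lg^2)^2/β + β^2*Vg :=
    add_nonneg (by positivity) (mul_nonneg (by positivity) hVg0)
  -- unrolled bound
  have hDbound : ∀ t : ℕ, ∫ ω, ‖y (t+1) ω - gS (x t ω)‖^2 ∂μ ≤
      (1-β)^t * (∫ ω, ‖y 1 ω - gS (x 0 ω)‖^2 ∂μ) + ((η*Lf*Lg^2)^2/β + β^2*Vg)/β := by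
    intro t
    have hCb : 0 ≤ ((η*Lf*Lg^2)^2/β + β^2*Vg)/β := div_nonneg hC0 hβ0.le
    induction t with
    | zero =>
      have e : (0:ℕ)+1 = 1 := rfl
      rw [e, pow_zero, one_mul]
      linarith
    | succ t ih =>
      have h1 := hDrec t
      have h2 : (1-β) * (∫ ω, ‖y (t+1) ω - gS (x t ω)‖^2 ∂μ) ≤
          (1-β)*((1-β)^t * (∫ ω, ‖y 1 ω - gS (x 0 ω)‖^2 ∂μ) +
            ((η*Lf*Lg^2)^2/β + β^2*Vg)/β) := mul_le_mul_of_nonneg_left ih hγ0.le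
      have h3 : (1-β)*((1-β)^t * (∫ ω, ‖y 1 ω - gS (x 0 ω)‖^2 ∂μ) +
          ((η*Lf*Lg^2)^2/β + β^2*Vg)/β) + ((η*Lf*Lg^2)^2/β + β^2*Vg) =
          (1-β)^(t+1) * (∫ ω, ‖y 1 ω - gS (x 0 ω)‖^2 ∂μ) +
            ((η*Lf*Lg^2)^2/β + β^2*Vg)/β := by
        field_simp
        ring
      linarith
  -- main conclusion
  intro t ht c hc
  have hD0nn : 0 ≤ ∫ ω, ‖y 1 ω - gS (x 0 ω)‖^2 ∂μ := integral_nonneg fun ω => sq_nonneg _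
  have ht1 : (1:ℝ) ≤ (t:ℝ) := by exact_mod_cast ht
  have htβ : 0 < (t:ℝ)*β := mul_pos (by linarith) hβ0
  have hK0 : 0 < (c / Real.exp 1)^c * ((t:ℝ)*β)^(-c) := by positivity
  have hpow : (1-β)^t ≤ (c / Real.exp 1)^c * ((t:ℝ)*β)^(-c) := by
    have h1 : (1-β:ℝ) ≤ Real.exp (-β) := by
      have := Real.add_one_le_exp (-β); linarith
    have h2 : (1-β)^t ≤ (Real.exp (-β))^t := pow_le_pow_left₀ hγ0.le h1 t
    have h3 : (Real.exp (-β))^t = Real.exp (-((t:ℝ)*β)) := by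
      rw [← Real.exp_nat_mul]; ring_nf
    calc (1-β)^t ≤ Real.exp (-((t:ℝ)*β)) := by rw [← h3]; exact h2
      _ ≤ _ := aux_exp_bound hc htβ
  have hreal : ∫ ω, ‖y (t+1) ω - gS (x t ω)‖^2 ∂μ ≤
      ((c / Real.exp 1)^c * ((t:ℝ)*β)^(-c)) * (∫ ω, ‖y 1 ω - gS (x 0 ω)‖^2 ∂μ) +
      (Lf^2*Lg^4*η^2/β^2 + 2*Vg*β) := by
    have hb := hDbound t
    have hm1 : (1-β)^t * (∫ ω, ‖y 1 ω - gS (x 0 ω)‖^2 ∂μ) ≤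
        ((c / Real.exp 1)^c * ((t:ℝ)*β)^(-c)) * (∫ ω, ‖y 1 ω - gS (x 0 ω)‖^2 ∂μ) :=
      mul_le_mul_of_nonneg_right hpow hD0nn
    have hCb : ((η*Lf*Lg^2)^2/β + β^2*Vg)/β ≤ Lf^2*Lg^4*η^2/β^2 + 2*Vg*β := by
      have e1 : ((η*Lf*Lg^2)^2/β + β^2*Vg)/β = Lf^2*Lg^4*η^2/β^2 + β*Vg := by
        field_simp
      rw [e1]
      nlinarith [hVg0, hβ0]
    linarith
  -- convert to lintegral
  have hlint : ∀ s : ℕ, ∫⁻ ω, (‖y (s+1) ω - gS (x s ω)‖₊ : ℝ≥0∞)^2 ∂μ =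
      ENNReal.ofReal (∫ ω, ‖y (s+1) ω - gS (x s ω)‖^2 ∂μ) := by
    intro s
    rw [ofReal_integral_eq_lintegral_ofReal (hDint s) (ae_of_all _ fun ω => sq_nonneg _)]
    apply lintegral_congr fun ω => ?_
    rw [ENNReal.ofReal_pow (norm_nonneg _), ofReal_norm, enorm_eq_nnnorm]
  have hlint0 : ∫⁻ ω, (‖y 1 ω - gS (x 0 ω)‖₊ : ℝ≥0∞)^2 ∂μ =
      ENNReal.ofReal (∫ ω, ‖y 1 ω - gS (x 0 ω)‖^2 ∂μ) := hlint 0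
  rw [hlint t, hlint0]
  calc ENNReal.ofReal (∫ ω, ‖y (t+1) ω - gS (x t ω)‖^2 ∂μ)
      ≤ ENNReal.ofReal (((c / Real.exp 1)^c * ((t:ℝ)*β)^(-c)) *
          (∫ ω, ‖y 1 ω - gS (x 0 ω)‖^2 ∂μ) + (Lf^2*Lg^4*η^2/β^2 + 2*Vg*β)) :=
        ENNReal.ofReal_le_ofReal hreal
    _ ≤ ENNReal.ofReal (((c / Real.exp 1)^c * ((t:ℝ)*β)^(-c)) *
          (∫ ω, ‖y 1 ω - gS (x 0 ω)‖^2 ∂μ)) +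
        ENNReal.ofReal (Lf^2*Lg^4*η^2/β^2 + 2*Vg*β) := ENNReal.ofReal_add_le
    _ = ENNReal.ofReal ((c / Real.exp 1)^c * ((t:ℝ)*β)^(-c)) *
          ENNReal.ofReal (∫ ω, ‖y 1 ω - gS (x 0 ω)‖^2 ∂μ) +
        ENNReal.ofReal (Lf^2*Lg^4*η^2/β^2 + 2*Vg*β) := by
        rw [ENNReal.ofReal_mul hK0.le]
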